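/- Let α = (α_1,…,α_N) ∈ ℂ^N and let (f,g) ∈ S̃(α). If all the roots of the characteristic polynomial of the mixed frame operator TU* are purely imaginary (have zero real part), then FP(f,g) is a real number, ∑_{m=1}^N α_m is purely imaginary, and FP(f,g) ≤ (1/d)·(∑_{m=1}^N α_m)² (the right-hand side being a nonpositive real number). -/

import Mathlib

open scoped ComplexInnerProductSpace

open Polynomial in
/-- Evaluation of the characteristic polynomial of a complex matrix. -/
lemma MixedFP.eval_charpoly {n : Type*} [Fintype n] [DecidableEq n] (A : Matrix n n ℂ) (x : ℂ) :
    A.charpoly.eval x = (x • (1 : Matrix n n ℂ) - A).det := by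
  rw [Matrix.charpoly, ← Polynomial.coe_evalRingHom, RingHom.map_det]
  congr 1
  ext i j
  by_cases h : i = j <;>
    simp [h, Matrix.charmatrix_apply, Matrix.one_apply, Matrix.smul_apply]

open Polynomial in
/-- The roots of the characteristic polynomial of `A ^ 2` are the squares of those of `A`. -/
lemma MixedFP.roots_charpoly_sq {n : Type*} [Fintype n] [DecidableEq n] (A : Matrix n n ℂ) :
    (A ^ 2).charpoly.roots = A.charpoly.roots.map (· ^ 2) := by
  set q := A.charpoly with hqdef
  set s := q.roots with hsdef
  have hcard : Multiset.card s = Fintype.card n := by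
    rw [hsdef, Polynomial.splits_iff_card_roots.mp (IsAlgClosed.splits q),
      hqdef, Matrix.charpoly_natDegree_eq_dim]
  have hq : q = (s.map fun a => X - C a).prod :=
    (IsAlgClosed.splits q).eq_prod_roots_of_monic A.charpoly_monic
  have hp : (A ^ 2).charpoly = ((s.map fun a => a ^ 2).map fun a => X - C a).prod := by
    apply Polynomial.funext
    intro y
    obtain ⟨x, rfl⟩ := IsAlgClosed.exists_pow_nat_eq y (n := 2) (by norm_num)
    have hfact : (x ^ 2) • (1 : Matrix n n ℂ) - A ^ 2
        = (x • (1 : Matrix n n ℂ) - A) * (x • (1 : Matrix n n ℂ) + A) := by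
      rw [mul_add, sub_mul, sub_mul, smul_mul_smul_comm, one_mul,
        Matrix.smul_mul, Matrix.mul_smul, one_mul, Matrix.mul_one, sq, sq]
      abel
    have h1 : (A ^ 2).charpoly.eval (x ^ 2)
        = q.eval x * (x • (1 : Matrix n n ℂ) + A).det := by
      rw [MixedFP.eval_charpoly, hfact, Matrix.det_mul, MixedFP.eval_charpoly]
    have h2 : (x • (1 : Matrix n n ℂ) + A).det
        = (-1 : ℂ) ^ Fintype.card n * q.eval (-x) := by
      rw [MixedFP.eval_charpoly]
      rw [show (-x) • (1 : Matrix n n ℂ) - A = (-1 : ℂ) • (x • (1 : Matrix n n ℂ) + A) by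
        rw [smul_add, neg_one_smul, neg_one_smul, neg_smul, sub_eq_add_neg]]
      rw [Matrix.det_smul]
      rw [← mul_assoc, ← mul_pow]
      simp
    rw [h1, h2, hq]
    simp only [Polynomial.eval_multiset_prod, Multiset.map_map, Function.comp,
      Polynomial.eval_sub, Polynomial.eval_X, Polynomial.eval_C]
    rw [mul_comm (Multiset.prod _), mul_assoc]
    rw [show ((-1 : ℂ) ^ Fintype.card n) = (-1 : ℂ) ^ Multiset.card s by rw [hcard]]
    rw [← Multiset.prod_map_mul]
    have : s.map (fun a => (-x - a) * (x - a)) = (s.map fun a => x ^ 2 - a ^ 2).map Neg.neg := by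
      rw [Multiset.map_map]
      exact Multiset.map_congr rfl (fun a _ => by simp [Function.comp]; ring)
    rw [this, Multiset.prod_map_neg, Multiset.card_map, ← mul_assoc, ← pow_add,
      Even.neg_one_pow ⟨Multiset.card s, rfl⟩, one_mul]
  rw [hp, Polynomial.roots_multiset_prod_X_sub_C]

/- `H` is a complex inner product space of finite dimension `d = Module.finrank ℂ H`.
The paper's inner product `⟨x, y⟩` is linear in the first argument, hence it corresponds to
Mathlib's `⟪y, x⟫ = inner y x` (Mathlib's inner product is linear in the second argument). -/
variable {H : Type*} [NormedAddCommGroup H] [InnerProductSpace ℂ H] [FiniteDimensional ℂ H]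

/-- The mixed frame operator `TU⋆ : x ↦ ∑ m, ⟨x, g m⟩ f m` (paper convention),
i.e. `x ↦ ∑ m, ⟪g m, x⟫ • f m` in Mathlib's convention. Note that `UT⋆` for the pair
`(f, g)` is then `mixedOp g f`. -/
noncomputable def mixedOp {N : ℕ} (f g : Fin N → H) : H →ₗ[ℂ] H where
  toFun x := ∑ m, (⟪g m, x⟫) • f m
  map_add' x y := by
    simp [inner_add_right, add_smul, Finset.sum_add_distrib]
  map_smul' c x := by
    simp [inner_smul_right, mul_smul, Finset.smul_sum]

/-- The mixed frame potential `FP(f,g) = ∑ m, ∑ n, ⟨f m, g n⟩ * ⟨f n, g m⟩`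
(paper convention: inner product linear in the first argument). -/
noncomputable def mixedFP {N : ℕ} (f g : Fin N → H) : ℂ :=
  ∑ m, ∑ n, ⟪g n, f m⟫ * ⟪g m, f n⟫

lemma MixedFP.trace_mixedOp {N : ℕ} (f g : Fin N → H) :
    LinearMap.trace ℂ H (mixedOp f g) = ∑ m, ⟪g m, f m⟫ := by
  set b := stdOrthonormalBasis ℂ H
  rw [LinearMap.trace_eq_matrix_trace ℂ b.toBasis, Matrix.trace]
  have hdiag : ∀ i, (LinearMap.toMatrix b.toBasis b.toBasis (mixedOp f g)).diag i
      = ∑ m, ⟪g m, b i⟫ * ⟪b i, f m⟫ := by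
    intro i
    rw [Matrix.diag, LinearMap.toMatrix_apply]
    rw [OrthonormalBasis.coe_toBasis_repr_apply, OrthonormalBasis.repr_apply_apply,
      OrthonormalBasis.coe_toBasis]
    simp [mixedOp, inner_sum, inner_smul_right, mul_comm]
  rw [Finset.sum_congr rfl fun i _ => hdiag i, Finset.sum_comm]
  exact Finset.sum_congr rfl fun m _ => b.sum_inner_mul_inner (g m) (f m)

omit [FiniteDimensional ℂ H] in
lemma MixedFP.mixedOp_comp {N : ℕ} (f g : Fin N → H) :
    mixedOp f g ∘ₗ mixedOp f g = mixedOp (fun m => mixedOp f g (f m)) g := by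
  apply LinearMap.ext
  intro x
  show (mixedOp f g) ((mixedOp f g) x) = _
  simp only [mixedOp, LinearMap.coe_mk, AddHom.coe_mk, map_sum, map_smul]

lemma MixedFP.trace_eq_sum_roots (T : H →ₗ[ℂ] H) :
    LinearMap.trace ℂ H T = (LinearMap.charpoly T).roots.sum := by
  set b := (stdOrthonormalBasis ℂ H).toBasis
  rw [LinearMap.trace_eq_matrix_trace ℂ b, Matrix.trace_eq_sum_roots_charpoly,
    LinearMap.charpoly_toMatrix]

lemma MixedFP.trace_comp_self (T : H →ₗ[ℂ] H) :
    LinearMap.trace ℂ H (T ∘ₗ T) = ((LinearMap.charpoly T).roots.map (· ^ 2)).sum := by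
  set b := (stdOrthonormalBasis ℂ H).toBasis
  rw [LinearMap.trace_eq_matrix_trace ℂ b, LinearMap.toMatrix_comp b b b, ← sq,
    Matrix.trace_eq_sum_roots_charpoly, MixedFP.roots_charpoly_sq, LinearMap.charpoly_toMatrix]

lemma MixedFP.card_roots_charpoly (T : H →ₗ[ℂ] H) :
    Multiset.card (LinearMap.charpoly T).roots = Module.finrank ℂ H := by
  rw [Polynomial.splits_iff_card_roots.mp (IsAlgClosed.splits _),
    LinearMap.charpoly_natDegree]

lemma MixedFP.multiset_sq_sum_le (t : Multiset ℝ) :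
    t.sum ^ 2 ≤ (Multiset.card t) * (t.map (fun x => x ^ 2)).sum := by
  set l := t.toList with hl
  have h1 : t.sum = l.sum := by rw [hl, Multiset.sum_toList]
  have h2 : (t.map (fun x => x ^ 2)).sum = (l.map (fun x => x ^ 2)).sum := by
    conv_lhs => rw [← Multiset.coe_toList t]
    rw [Multiset.map_coe, Multiset.sum_coe]
  have h3 : Multiset.card t = l.length := by rw [hl, Multiset.length_toList]
  rw [h1, h2, h3, ← Fin.sum_univ_getElem, ← Fin.sum_univ_fun_getElem l (fun x => x ^ 2)]
  have := sq_sum_le_card_mul_sum_sq (s := (Finset.univ : Finset (Fin l.length)))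
    (f := fun i => l[i.1])
  simpa using this

/-- if all eigenvalues of `TU⋆` (roots of its characteristic polynomial) are
purely imaginary, then `FP(f,g)` is real, `∑ α m` is purely imaginary, and
`FP(f,g) ≤ (1/d) (∑ α m)²` (the right-hand side being a nonpositive real number). -/
theorem mixedFP_upper_bound_of_imaginary_eigenvalues {N : ℕ} (hd : 1 ≤ Module.finrank ℂ H)
    (α : Fin N → ℂ) (f g : Fin N → H) (hS : ∀ m, ⟪g m, f m⟫ = α m)
    (hroots : ∀ z ∈ (LinearMap.charpoly (mixedOp f g)).roots, z.re = 0) :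
    (mixedFP f g).im = 0 ∧ (∑ m, α m).re = 0 ∧
    (mixedFP f g).re ≤ (1 / (Module.finrank ℂ H : ℝ)) * ((∑ m, α m) ^ 2).re := by
  set T := mixedOp f g with hT
  set s := (LinearMap.charpoly T).roots with hs
  have hcard : Multiset.card s = Module.finrank ℂ H := MixedFP.card_roots_charpoly T
  have htr : s.sum = ∑ m, α m := by
    rw [← MixedFP.trace_eq_sum_roots T, hT, MixedFP.trace_mixedOp]
    exact Finset.sum_congr rfl (fun m _ => hS m)
  have hFP : mixedFP f g = (s.map (fun z => z ^ 2)).sum := by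
    rw [← MixedFP.trace_comp_self T, hT, MixedFP.mixedOp_comp, MixedFP.trace_mixedOp]
    rw [mixedFP]
    refine Finset.sum_congr rfl (fun m _ => ?_)
    show ∑ n, ⟪g n, f m⟫ * ⟪g m, f n⟫ = ⟪g m, ∑ n, ⟪g n, f m⟫ • f n⟫
    simp only [inner_sum, inner_smul_right]
  -- real/imag part computations
  have hre : ∀ z ∈ s, z.re = 0 := hroots
  have hresum : ∀ u : Multiset ℂ, u.sum.re = (u.map Complex.re).sum :=
    fun u => map_multiset_sum Complex.reAddGroupHom u
  have himsum : ∀ u : Multiset ℂ, u.sum.im = (u.map Complex.im).sum :=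
    fun u => map_multiset_sum Complex.imAddGroupHom u
  have hsum_re : s.sum.re = 0 := by
    rw [hresum]
    refine Multiset.sum_eq_zero (fun x hx => ?_)
    obtain ⟨z, hz, rfl⟩ := Multiset.mem_map.mp hx
    exact hre z hz
  set S : ℝ := (s.map Complex.im).sum with hSdef
  have hsum_im : s.sum.im = S := himsum s
  have hFPim : ((s.map (fun z => z ^ 2)).sum).im = 0 := by
    rw [himsum]
    refine Multiset.sum_eq_zero (fun x hx => ?_)
    obtain ⟨y, hy, rfl⟩ := Multiset.mem_map.mp hx
    obtain ⟨z, hz, rfl⟩ := Multiset.mem_map.mp hy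
    simp [sq, Complex.mul_im, hre z hz]
  set Q : ℝ := (s.map (fun z => z.im ^ 2)).sum with hQdef
  have hFPre : ((s.map (fun z => z ^ 2)).sum).re = -Q := by
    rw [hresum]
    rw [Multiset.map_map]
    rw [show (s.map (Complex.re ∘ fun z => z ^ 2)) = s.map (fun z => -(z.im ^ 2)) from
      Multiset.map_congr rfl (fun z hz => by
        simp [Function.comp, sq, Complex.mul_re, hre z hz])]
    rw [hQdef, ← Multiset.sum_map_neg', Multiset.map_map]
    rfl
  have hRHSre : ((∑ m, α m) ^ 2).re = -(S ^ 2) := by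
    rw [← htr, sq, Complex.mul_re, hsum_re, hsum_im]
    ring
  have hd0 : (0 : ℝ) < (Module.finrank ℂ H : ℝ) := by
    exact_mod_cast Nat.lt_of_lt_of_le Nat.zero_lt_one hd
  have hCS : S ^ 2 ≤ (Module.finrank ℂ H : ℝ) * Q := by
    have := MixedFP.multiset_sq_sum_le (s.map Complex.im)
    rw [Multiset.card_map, hcard, Multiset.map_map] at this
    simpa [Function.comp] using this
  refine ⟨by rw [hFP]; exact hFPim, by rw [← htr]; exact hsum_re, ?_⟩
  rw [hFP, hFPre, hRHSre, mul_neg, neg_le_neg_iff, one_div, inv_mul_le_iff₀ hd0]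
  exact hCS
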